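/- Let n ≥ 3 and let ω be a weight function on the edges of K_n. Then ω satisfies the triangle condition (in every triangle of K_n the maximum of the three edge weights is attained by at least two of the edges) if and only if in every cycle of K_n the maximum of the weights of the edges of the cycle is attained by at least two edges of the cycle. -/

import Mathlib

/-- Two of the three reals `a, b, c` are equal and not less than the third; equivalently,
the maximum of the three is attained at least twice. -/
def TwoMax (a b c : ℝ) : Prop :=
  (a = b ∧ c ≤ a) ∨ (a = c ∧ b ≤ a) ∨ (b = c ∧ a ≤ b)

/-- The triangle condition for a weight function `ω` on the edges of the complete graph
on `Fin n`: in every triangle, two of the three edge weights are equal and not less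
than the third. -/
def TriangleCondition (n : ℕ) (ω : Sym2 (Fin n) → ℝ) : Prop :=
  ∀ u v w : Fin n, u ≠ v → v ≠ w → u ≠ w →
    TwoMax (ω s(u, v)) (ω s(v, w)) (ω s(u, w))

/-- The cycle condition for a weight function `ω` on the edges of the complete graph on
`Fin n`: in every cycle, the maximum edge weight is attained by at least two edges of
the cycle. -/
def CycleCondition (n : ℕ) (ω : Sym2 (Fin n) → ℝ) : Prop :=
  ∀ (x : Fin n) (C : SimpleGraph.Walk (⊤ : SimpleGraph (Fin n)) x x), C.IsCycle →
    ∃ e ∈ C.edges, ∃ f ∈ C.edges, e ≠ f ∧ ω e = ω f ∧ ∀ g ∈ C.edges, ω g ≤ ω e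

/-- The ω-weight of a graph `T` on `Fin n`: the sum of `ω` over the edges of `T`. -/
noncomputable def graphWeight (n : ℕ) (ω : Sym2 (Fin n) → ℝ)
    (T : SimpleGraph (Fin n)) : ℝ :=
  ∑ᶠ e ∈ T.edgeSet, ω e

/-- `T` is an ω-minimum spanning tree of the complete graph on `Fin n`: it is a tree on
the vertex set `Fin n` and no such tree has strictly smaller ω-weight. -/
def IsMinSpanningTree (n : ℕ) (ω : Sym2 (Fin n) → ℝ) (T : SimpleGraph (Fin n)) : Prop :=
  T.IsTree ∧ ∀ T' : SimpleGraph (Fin n), T'.IsTree →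
    graphWeight n ω T ≤ graphWeight n ω T'

open SimpleGraph Walk in
lemma path_max (n : ℕ) (ω : Sym2 (Fin n) → ℝ) (h : TriangleCondition n ω) :
    ∀ {u v : Fin n} (p : SimpleGraph.Walk (⊤ : SimpleGraph (Fin n)) u v), p.IsPath → u ≠ v →
      ∃ f ∈ p.edges, (∀ g ∈ p.edges, ω g ≤ ω f) ∧ ω s(u,v) ≤ ω f ∧
        (ω s(u,v) = ω f ∨ ∃ f' ∈ p.edges, f' ≠ f ∧ ω f' = ω f) := by
  intro u v p
  induction p with
  | nil => intro _ huv; exact absurd rfl huv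
  | @cons u w v hadj q ih =>
    intro hp huv
    have huw : u ≠ w := hadj.ne
    have hqp : q.IsPath := hp.of_cons
    have hus : u ∉ q.support := by
      have := hp.support_nodup
      simp only [support_cons, List.nodup_cons] at this
      exact this.1
    by_cases hwv : w = v
    · subst hwv
      have : q = Walk.nil := isPath_iff_eq_nil.mp hqp
      subst this
      refine ⟨s(u, w), by simp, ?_, le_refl _, Or.inl rfl⟩
      intro g hg; simp at hg; subst hg; exact le_refl _
    · obtain ⟨f, hf, hmax, hle, hcase⟩ := ih hqp hwv
      have htri := h u w v huw hwv huv
      set a := ω s(u, w) with ha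
      set b := ω s(w, v) with hb
      set c := ω s(u, v) with hc
      have huwq : s(u, w) ∉ q.edges := fun hmem => hus (q.fst_mem_support_of_mem_edges hmem)
      by_cases haM : a ≤ ω f
      · refine ⟨f, by simp [hf], ?_, ?_, ?_⟩
        · intro g hg
          simp only [edges_cons, List.mem_cons] at hg
          rcases hg with rfl | hg
          · exact haM
          · exact hmax g hg
        · rcases htri with ⟨hab, hca⟩ | ⟨hac, hba⟩ | ⟨hbc, hab2⟩
          · exact le_trans hca haM
          · rw [← hac]; exact haM
          · rw [← hbc]; exact hle
        · rcases hcase with heq | ⟨f', hf', hne, heq'⟩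
          · -- b = ω f
            rcases htri with ⟨hab, hca⟩ | ⟨hac, hba⟩ | ⟨hbc, hab2⟩
            · -- a = b, so a = ω f; second edge s(u,w)
              refine Or.inr ⟨s(u, w), by simp, ?_, hab.trans heq⟩
              intro hcontra; rw [hcontra] at huwq; exact huwq hf
            · exact Or.inl (by rw [← hac]; exact le_antisymm haM (heq ▸ hba))
            · exact Or.inl (by rw [← hbc]; exact heq)
          · exact Or.inr ⟨f', by simp [hf'], hne, heq'⟩
      · push_neg at haM
        refine ⟨s(u, w), by simp, ?_, ?_, ?_⟩
        · intro g hg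
          simp only [edges_cons, List.mem_cons] at hg
          rcases hg with rfl | hg
          · exact le_refl _
          · exact le_trans (hmax g hg) (le_of_lt haM)
        · rcases htri with ⟨hab, hca⟩ | ⟨hac, hba⟩ | ⟨hbc, hab2⟩
          · exact hca
          · exact le_of_eq hac.symm
          · exact absurd (lt_of_le_of_lt (hab2.trans hle) haM) (lt_irrefl a)
        · rcases htri with ⟨hab, hca⟩ | ⟨hac, hba⟩ | ⟨hbc, hab2⟩
          · exact absurd (lt_of_le_of_lt (hab ▸ hle) haM) (lt_irrefl a)
          · exact Or.inl hac.symm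
          · exact absurd (lt_of_le_of_lt (hab2.trans hle) haM) (lt_irrefl a)

open SimpleGraph Walk in
/-- For `n ≥ 3`, a weight function on the edges of the complete graph `K_n` satisfies
the triangle condition (in every triangle the maximum weight is attained at least
twice) if and only if in every cycle of `K_n` the maximum weight is attained by at
least two edges of the cycle. -/
theorem triangleCondition_iff_cycleCondition (n : ℕ) (hn : 3 ≤ n)
    (ω : Sym2 (Fin n) → ℝ) :
    TriangleCondition n ω ↔ CycleCondition n ω := by
  constructor
  · intro hT x C hC
    obtain ⟨y, hadj, q, rfl⟩ := Walk.not_nil_iff.mp hC.not_nil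
    obtain ⟨hqp, hne⟩ := (Walk.cons_isCycle_iff q hadj).mp hC
    have hyx : y ≠ x := fun h => hadj.ne h.symm
    obtain ⟨f, hf, hmax, hle, hcase⟩ := path_max n ω hT q hqp hyx
    have hsw : s(y, x) = s(x, y) := Sym2.eq_swap
    rw [hsw] at hle hcase
    rcases hcase with heq | ⟨f', hf', hne', heq'⟩
    · refine ⟨s(x, y), by simp, f, by simp [hf], ?_, heq, ?_⟩
      · rintro rfl; exact hne hf
      · intro g hg
        simp only [edges_cons, List.mem_cons] at hg
        rcases hg with rfl | hg
        · exact le_refl _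
        · exact (hmax g hg).trans heq.symm.le
    · refine ⟨f, by simp [hf], f', by simp [hf'], fun h => hne' h.symm, heq'.symm, ?_⟩
      intro g hg
      simp only [edges_cons, List.mem_cons] at hg
      rcases hg with rfl | hg
      · exact hle
      · exact hmax g hg
  · intro hCyc u v w huv hvw huw
    have hwu : w ≠ u := fun h => huw h.symm
    let C : SimpleGraph.Walk (⊤ : SimpleGraph (Fin n)) u u :=
      Walk.cons (show (⊤ : SimpleGraph (Fin n)).Adj u v by simp [huv])
        (Walk.cons (show (⊤ : SimpleGraph (Fin n)).Adj v w by simp [hvw])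
          (Walk.cons (show (⊤ : SimpleGraph (Fin n)).Adj w u by simp [hwu]) Walk.nil))
    have hCedges : C.edges = [s(u, v), s(v, w), s(u, w)] := by
      simp [C, Sym2.eq_swap]
    have hCcyc : C.IsCycle := by
      rw [Walk.cons_isCycle_iff]
      constructor
      · rw [Walk.isPath_def]
        simp [huv, hvw, huw, hwu, Ne.symm hvw, Ne.symm huv]
      · simp [Sym2.eq_iff]
        tauto
    obtain ⟨e, he, f, hf, hnef, heq, hall⟩ := hCyc u C hCcyc
    rw [hCedges] at he hf hall
    have h1 := hall s(u, v) (by simp)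
    have h2 := hall s(v, w) (by simp)
    have h3 := hall s(u, w) (by simp)
    simp only [List.mem_cons, List.not_mem_nil, or_false, List.mem_singleton] at he hf
    unfold TwoMax
    rcases he with rfl | rfl | rfl <;> rcases hf with rfl | rfl | rfl <;>
      first
        | exact absurd rfl hnef
        | exact Or.inl ⟨heq, by linarith⟩
        | exact Or.inl ⟨heq.symm, by linarith⟩
        | exact Or.inr (Or.inl ⟨heq, by linarith⟩)
        | exact Or.inr (Or.inl ⟨heq.symm, by linarith⟩)
        | exact Or.inr (Or.inr ⟨heq, by linarith⟩)
        | exact Or.inr (Or.inr ⟨heq.symm, by linarith⟩)
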